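/- For every integer j ≥ 0, the identity (−1)^j q^{−C(j+1,2)} y^{−j} ∑_{i≥j} (−1)^i q^{C(i+1,2)} qbinom(i,j) y^i ∏_{r=1}^{i+1} 1/(1 − q^{r+j} y) = 1 holds as an identity of formal power series. -/

import Mathlib

open Finset

/-- The `q`-factorial `[m]! = ∏_{r=1}^m (1 + q + ⋯ + q^{r-1})`, evaluated at a real `q`. -/
noncomputable def qFactorial (q : ℝ) (m : ℕ) : ℝ :=
  ∏ r ∈ Finset.Icc 1 m, ∑ t ∈ Finset.range r, q ^ t

/-- The Gaussian binomial coefficient `qbinom(i,j) = [i]!/([j]![i−j]!)`, evaluated at a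
real `q`. -/
noncomputable def qBinom (q : ℝ) (i j : ℕ) : ℝ :=
  qFactorial q i / (qFactorial q j * qFactorial q (i - j))

noncomputable def qInt (q : ℝ) (r : ℕ) : ℝ := ∑ t ∈ Finset.range r, q ^ t

lemma qFactorial_eq (q : ℝ) (m : ℕ) : qFactorial q m = ∏ r ∈ Finset.Ioc 0 m, qInt q r := by
  rw [qFactorial, ← Finset.Icc_add_one_left_eq_Ioc]; rfl

lemma qFactorial_zero (q : ℝ) : qFactorial q 0 = 1 := by simp [qFactorial]

lemma qFactorial_succ (q : ℝ) (m : ℕ) :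
    qFactorial q (m + 1) = qFactorial q m * qInt q (m + 1) := by
  rw [qFactorial_eq, qFactorial_eq, ← Finset.Icc_add_one_left_eq_Ioc,
    Finset.prod_Icc_succ_top (by omega), Finset.Icc_add_one_left_eq_Ioc]

lemma qInt_ne_zero {q : ℝ} (hq : |q| < 1) {r : ℕ} (hr : 1 ≤ r) : qInt q r ≠ 0 := by
  have h1 : q ≠ 1 := by rintro rfl; simp at hq
  have h2 : q ^ r ≠ 1 := by
    intro h
    have : |q ^ r| < 1 := by
      rw [abs_pow]
      calc |q| ^ r ≤ |q| ^ 1 := pow_le_pow_of_le_one (abs_nonneg q) hq.le hr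
      _ = |q| := pow_one _
      _ < 1 := hq
    rw [h] at this; simp at this
  have hgs := geom_sum_mul q r
  intro h0
  rw [qInt] at h0
  rw [h0, zero_mul] at hgs
  exact h2 (by linarith)

lemma qFactorial_ne_zero {q : ℝ} (hq : |q| < 1) (m : ℕ) : qFactorial q m ≠ 0 := by
  induction m with
  | zero => simp [qFactorial_zero]
  | succ n ih =>
    rw [qFactorial_succ]
    exact mul_ne_zero ih (qInt_ne_zero hq (by omega))

lemma qFactorial_add (q : ℝ) (a b : ℕ) :
    qFactorial q (a + b) = qFactorial q a * ∏ r ∈ Finset.Ioc a (a + b), qInt q r := by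
  rw [qFactorial_eq, qFactorial_eq, Finset.prod_Ioc_consecutive _ (Nat.zero_le a) (Nat.le_add_right a b)]

lemma qInt_add (q : ℝ) (a b : ℕ) : qInt q (a + b) = qInt q a + q ^ a * qInt q b := by
  rw [qInt, qInt, qInt, Finset.sum_range_add, Finset.mul_sum]
  congr 1
  exact Finset.sum_congr rfl fun i _ => by rw [pow_add]

lemma qBinom_zero {q : ℝ} (hq : |q| < 1) (n : ℕ) : qBinom q n 0 = 1 := by
  rw [qBinom, Nat.sub_zero, qFactorial_zero, one_mul, div_self (qFactorial_ne_zero hq n)]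

lemma qBinom_self {q : ℝ} (hq : |q| < 1) (n : ℕ) : qBinom q n n = 1 := by
  rw [qBinom, Nat.sub_self, qFactorial_zero, mul_one, div_self (qFactorial_ne_zero hq n)]

lemma qBinom_pascal {q : ℝ} (hq : |q| < 1) (m b : ℕ) :
    qBinom q (m + b + 2) (m + 1)
      = qBinom q (m + b + 1) m + q ^ (m + 1) * qBinom q (m + b + 1) (m + 1) := by
  have h1 : m + b + 2 - (m + 1) = b + 1 := by omega
  have h2 : m + b + 1 - m = b + 1 := by omega
  have h3 : m + b + 1 - (m + 1) = b := by omega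
  rw [qBinom, qBinom, qBinom, h1, h2, h3]
  have key : qInt q (m + b + 2) = qInt q (m + 1) + q ^ (m + 1) * qInt q (b + 1) := by
    have := qInt_add q (m + 1) (b + 1)
    rw [show m + 1 + (b + 1) = m + b + 2 by omega] at this
    exact this
  have e1 : qFactorial q (m + b + 2) = qFactorial q (m + b + 1) * qInt q (m + b + 2) :=
    qFactorial_succ q (m + b + 1)
  have e2 : qFactorial q (m + 1) = qFactorial q m * qInt q (m + 1) := qFactorial_succ q m
  have e3 : qFactorial q (b + 1) = qFactorial q b * qInt q (b + 1) := qFactorial_succ q b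
  rw [e1, e2, e3, key]
  have n1 := qFactorial_ne_zero hq m
  have n2 := qFactorial_ne_zero hq b
  have n3 := qFactorial_ne_zero hq (m + b + 1)
  have n4 := qInt_ne_zero hq (show 1 ≤ m + 1 by omega)
  have n5 := qInt_ne_zero hq (show 1 ≤ b + 1 by omega)
  field_simp

noncomputable def Pfun (q x : ℝ) (j N : ℕ) : ℝ :=
  ∑ s ∈ Finset.range (j + 1),
    (-1 : ℝ) ^ (N + s) * q ^ ((N + s + 1).choose 2) * qBinom q (N + j) (j - s) * x ^ (N + s)

lemma choose_two_succ (m : ℕ) : (m + 1).choose 2 = m.choose 2 + m := by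
  have h : (m + 1).choose 2 = m.choose 1 + m.choose 2 := Nat.choose_succ_succ m 1
  rw [Nat.choose_one_right] at h
  omega

lemma key_identity {q : ℝ} (hq : |q| < 1) (x : ℝ) (j k : ℕ) :
    Pfun q x j k * (1 - q ^ (k + j + 1) * x) - Pfun q x j (k + 1)
      = (-1 : ℝ) ^ k * q ^ ((k + 1).choose 2) * qBinom q (k + j) j * x ^ k := by
  have expand : Pfun q x j (k + 1) + q ^ (k + j + 1) * x * Pfun q x j k
      = Pfun q x j k - (-1 : ℝ) ^ k * q ^ ((k + 1).choose 2) * qBinom q (k + j) j * x ^ k := by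
    have h1 : Pfun q x j (k + 1) + q ^ (k + j + 1) * x * Pfun q x j k
        = ∑ s ∈ Finset.range (j + 1),
          ((-1 : ℝ) ^ (k + 1 + s) * q ^ ((k + 1 + s + 1).choose 2) * qBinom q (k + 1 + j) (j - s)
              * x ^ (k + 1 + s)
            + q ^ (k + j + 1) * x *
              ((-1 : ℝ) ^ (k + s) * q ^ ((k + s + 1).choose 2) * qBinom q (k + j) (j - s)
                * x ^ (k + s))) := by
      rw [Pfun, Pfun, Finset.mul_sum, ← Finset.sum_add_distrib]
    rw [h1, Finset.sum_range_succ]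
    have hlast : (-1 : ℝ) ^ (k + 1 + j) * q ^ ((k + 1 + j + 1).choose 2) * qBinom q (k + 1 + j) (j - j)
              * x ^ (k + 1 + j)
            + q ^ (k + j + 1) * x *
              ((-1 : ℝ) ^ (k + j) * q ^ ((k + j + 1).choose 2) * qBinom q (k + j) (j - j)
                * x ^ (k + j)) = 0 := by
      rw [Nat.sub_self, qBinom_zero hq, qBinom_zero hq, show k + 1 + j = k + j + 1 by omega,
        show (k + j + 1 + 1).choose 2 = (k + j + 1).choose 2 + (k + j + 1) from choose_two_succ _]
      ring
    rw [hlast, add_zero]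
    have hcongr : ∀ s ∈ Finset.range j,
        ((-1 : ℝ) ^ (k + 1 + s) * q ^ ((k + 1 + s + 1).choose 2) * qBinom q (k + 1 + j) (j - s)
              * x ^ (k + 1 + s)
            + q ^ (k + j + 1) * x *
              ((-1 : ℝ) ^ (k + s) * q ^ ((k + s + 1).choose 2) * qBinom q (k + j) (j - s)
                * x ^ (k + s)))
          = (-1 : ℝ) ^ (k + (s + 1)) * q ^ ((k + (s + 1) + 1).choose 2)
              * qBinom q (k + j) (j - (s + 1)) * x ^ (k + (s + 1)) := by
      intro s hs
      have hsj : s < j := Finset.mem_range.mp hs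
      have hp := qBinom_pascal hq (j - s - 1) (k + s)
      rw [show j - s - 1 + (k + s) + 2 = k + 1 + j by omega,
          show j - s - 1 + 1 = j - s by omega,
          show j - s - 1 + (k + s) + 1 = k + j by omega] at hp
      rw [hp, show k + 1 + s = k + s + 1 by omega, show k + (s + 1) = k + s + 1 by omega,
          show j - (s + 1) = j - s - 1 by omega,
          show (k + s + 1 + 1).choose 2 = (k + s + 1).choose 2 + (k + s + 1) from choose_two_succ _,
          show k + j + 1 = (k + s + 1) + (j - s) by omega]
      ring
    rw [Finset.sum_congr rfl hcongr]
    have h2 : Pfun q x j k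
        = ∑ s ∈ Finset.range j,
            (-1 : ℝ) ^ (k + (s + 1)) * q ^ ((k + (s + 1) + 1).choose 2)
              * qBinom q (k + j) (j - (s + 1)) * x ^ (k + (s + 1))
          + (-1 : ℝ) ^ (k + 0) * q ^ ((k + 0 + 1).choose 2) * qBinom q (k + j) (j - 0)
              * x ^ (k + 0) := by
      rw [Pfun, Finset.sum_range_succ']
    rw [h2]
    simp only [add_zero, Nat.sub_zero]
    ring
  linarith [expand]

lemma Pfun_reindex (q x : ℝ) (hq : |q| < 1) (j : ℕ) :
    Pfun q x (j + 1) 0 = 1 + Pfun q x j 1 := by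
  rw [Pfun, Finset.sum_range_succ']
  have h0 : (-1 : ℝ) ^ (0 + 0) * q ^ ((0 + 0 + 1).choose 2) * qBinom q (0 + (j + 1)) (j + 1 - 0)
      * x ^ (0 + 0) = 1 := by
    simp [qBinom_self hq]
  rw [h0, add_comm]
  congr 1
  rw [Pfun]
  refine Finset.sum_congr rfl fun s hs => ?_
  have hsj : s < j + 1 := Finset.mem_range.mp hs
  rw [show 0 + (s + 1) = 1 + s by omega, show 0 + (j + 1) = 1 + j by omega,
      show j + 1 - (s + 1) = j - s by omega]

lemma Pfun_zero_eq {q : ℝ} (hq : |q| < 1) (x : ℝ) (j : ℕ) :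
    Pfun q x j 0 = ∏ r ∈ Finset.Icc 1 j, (1 - q ^ r * x) := by
  induction j with
  | zero =>
    simp [Pfun, qBinom_self hq]
  | succ n ih =>
    have hk := key_identity hq x n 0
    rw [show 0 + n + 1 = n + 1 by omega] at hk
    have h1 : (-1 : ℝ) ^ 0 * q ^ ((0 + 1).choose 2) * qBinom q (0 + n) n * x ^ 0 = 1 := by
      simp [qBinom_self hq]
    rw [h1] at hk
    rw [Pfun_reindex q x hq n, show Pfun q x n 1 = Pfun q x n 0 * (1 - q ^ (n + 1) * x) - 1 by
      linarith, ih, Finset.prod_Icc_succ_top (by omega : 1 ≤ n + 1)]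
    ring

noncomputable def Pinv (q x : ℝ) (n : ℕ) : ℝ := ∏ r ∈ Finset.Icc 1 n, (1 - q ^ r * x)⁻¹

noncomputable def termK (q x : ℝ) (j k : ℕ) : ℝ :=
  (-1 : ℝ) ^ k * q ^ ((k + 1).choose 2) * qBinom q (k + j) j * x ^ k * Pinv q x (k + j + 1)

noncomputable def Gfun (q x : ℝ) (j N : ℕ) : ℝ := Pfun q x j N * Pinv q x (N + j)

section
variable {q x : ℝ} (hq : |q| < 1) (hx : |x| < 1)

include hq hx

lemma factor_ne_zero {r : ℕ} (hr : 1 ≤ r) : 1 - q ^ r * x ≠ 0 := by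
  have h1 : |q ^ r * x| < 1 := by
    rw [abs_mul, abs_pow]
    calc |q| ^ r * |x| ≤ 1 * |x| := by
          apply mul_le_mul_of_nonneg_right _ (abs_nonneg x)
          exact pow_le_one₀ (abs_nonneg q) hq.le
      _ = |x| := one_mul _
      _ < 1 := hx
  intro h
  have h2 : q ^ r * x = 1 := by linarith [sub_eq_zero.mp h]
  rw [h2] at h1; simp at h1

lemma Gfun_zero : Gfun q x j 0 = 1 := by
  rw [Gfun, Pfun_zero_eq hq, Pinv, Nat.zero_add, ← Finset.prod_mul_distrib]
  rw [Finset.prod_congr rfl (fun r hr => mul_inv_cancel₀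
    (factor_ne_zero hq hx (Finset.mem_Icc.mp hr).1))]
  exact Finset.prod_const_one

omit hq hx in
lemma Pinv_succ (n : ℕ) : Pinv q x (n + 1) = Pinv q x n * (1 - q ^ (n + 1) * x)⁻¹ := by
  rw [Pinv, Pinv, Finset.prod_Icc_succ_top (by omega : 1 ≤ n + 1)]

lemma termK_eq_sub (j k : ℕ) : termK q x j k = Gfun q x j k - Gfun q x j (k + 1) := by
  have hP : Pinv q x (k + j) = Pinv q x (k + j + 1) * (1 - q ^ (k + j + 1) * x) := by
    rw [Pinv_succ, mul_assoc,
      inv_mul_cancel₀ (factor_ne_zero hq hx (by omega : 1 ≤ k + j + 1)), mul_one]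
  rw [Gfun, Gfun, show k + 1 + j = k + j + 1 by omega, hP, termK, ← key_identity hq x j k]
  ring

lemma partial_sum (j N : ℕ) :
    ∑ k ∈ Finset.range N, termK q x j k = 1 - Gfun q x j N := by
  induction N with
  | zero => simp [Gfun_zero hq hx]
  | succ n ih => rw [Finset.sum_range_succ, ih, termK_eq_sub hq hx]; ring

end

lemma geom_aux {a : ℝ} (h0 : 0 ≤ a) (h1 : a < 1) (n : ℕ) :
    ∑ t ∈ Finset.range n, a ^ t ≤ (1 - a)⁻¹ := by
  have hne : a ≠ 1 := by linarith
  rw [geom_sum_eq hne, show (a ^ n - 1) / (a - 1) = (1 - a ^ n) / (1 - a) by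
    rw [div_eq_div_iff (by linarith) (by linarith)]; ring, inv_eq_one_div]
  exact div_le_div₀ (by norm_num) (by nlinarith [pow_nonneg h0 n]) (by linarith) le_rfl

section
variable {q : ℝ} (hq : |q| < 1)

include hq

lemma qInt_abs_le (r : ℕ) : |qInt q r| ≤ (1 - |q|)⁻¹ := by
  calc |qInt q r| ≤ ∑ t ∈ Finset.range r, |q ^ t| := Finset.abs_sum_le_sum_abs _ _
    _ = ∑ t ∈ Finset.range r, |q| ^ t := by simp [abs_pow]
    _ ≤ (1 - |q|)⁻¹ := geom_aux (abs_nonneg q) hq r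

lemma qInt_abs_ge {r : ℕ} (hr : 1 ≤ r) : (1 - |q|) / 2 ≤ |qInt q r| := by
  have hm : qInt q r * (q - 1) = q ^ r - 1 := geom_sum_mul q r
  have h1 : |q ^ r - 1| ≥ 1 - |q| := by
    have : |q ^ r| ≤ |q| := by
      rw [abs_pow]
      calc |q| ^ r ≤ |q| ^ 1 := pow_le_pow_of_le_one (abs_nonneg q) hq.le hr
        _ = |q| := pow_one _
    have h2 : |q ^ r - 1| ≥ 1 - |q ^ r| := by
      have := abs_sub_abs_le_abs_sub (1 : ℝ) (q ^ r)
      rw [abs_one, abs_sub_comm] at this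
      linarith
    linarith
  have h2 : |q - 1| ≤ 2 := by
    have := abs_sub (q) (1 : ℝ)
    cases' abs_cases q with h h <;> cases' abs_cases (q - 1) with h' h' <;> linarith
  have h3 : |qInt q r| * |q - 1| = |q ^ r - 1| := by rw [← abs_mul, hm]
  nlinarith [abs_nonneg (qInt q r), abs_nonneg (q - 1)]

lemma qFactorial_abs_ge (m : ℕ) : ((1 - |q|) / 2) ^ m ≤ |qFactorial q m| := by
  have ha : (0:ℝ) < 1 - |q| := by linarith [abs_nonneg q]
  rw [qFactorial_eq, abs_prod]
  calc ((1 - |q|) / 2) ^ m = ∏ _r ∈ Finset.Ioc 0 m, ((1 - |q|) / 2) := by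
        rw [Finset.prod_const, Nat.card_Ioc, Nat.sub_zero]
    _ ≤ ∏ r ∈ Finset.Ioc 0 m, |qInt q r| := by
        apply Finset.prod_le_prod (fun _ _ => by linarith)
        intro r hr
        exact qInt_abs_ge hq (Finset.mem_Ioc.mp hr).1

lemma qBinom_bound (N j s : ℕ) (hs : s ≤ j) :
    |qBinom q (N + j) (j - s)| ≤ (2 / (1 - |q|) ^ 2) ^ j := by
  have ha : (0:ℝ) < 1 - |q| := by linarith [abs_nonneg q]
  have hfe : qFactorial q (N + j) = qFactorial q (N + s) * ∏ r ∈ Finset.Ioc (N + s) (N + j), qInt q r := by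
    have := qFactorial_add q (N + s) (j - s)
    rwa [show N + s + (j - s) = N + j by omega] at this
  have hre : qBinom q (N + j) (j - s)
      = (∏ r ∈ Finset.Ioc (N + s) (N + j), qInt q r) / qFactorial q (j - s) := by
    have hA := qFactorial_ne_zero hq (N + s)
    have hB := qFactorial_ne_zero hq (j - s)
    rw [qBinom, show N + j - (j - s) = N + s by omega, hfe]
    field_simp
  rw [hre, abs_div]
  have hnum : |∏ r ∈ Finset.Ioc (N + s) (N + j), qInt q r| ≤ ((1 - |q|)⁻¹) ^ (j - s) := by
    rw [abs_prod]
    calc ∏ r ∈ Finset.Ioc (N + s) (N + j), |qInt q r|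
        ≤ ∏ _r ∈ Finset.Ioc (N + s) (N + j), (1 - |q|)⁻¹ :=
          Finset.prod_le_prod (fun _ _ => abs_nonneg _) (fun r _ => qInt_abs_le hq r)
      _ = ((1 - |q|)⁻¹) ^ (j - s) := by
          rw [Finset.prod_const, Nat.card_Ioc, show N + j - (N + s) = j - s by omega]
  have hden : ((1 - |q|) / 2) ^ (j - s) ≤ |qFactorial q (j - s)| := qFactorial_abs_ge hq _
  calc |∏ r ∈ Finset.Ioc (N + s) (N + j), qInt q r| / |qFactorial q (j - s)|
      ≤ ((1 - |q|)⁻¹) ^ (j - s) / ((1 - |q|) / 2) ^ (j - s) := by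
        apply div_le_div₀ (by positivity) hnum (by positivity) hden
    _ = (2 / (1 - |q|) ^ 2) ^ (j - s) := by
        rw [← div_pow]
        congr 1
        field_simp
    _ ≤ (2 / (1 - |q|) ^ 2) ^ j := by
        apply pow_le_pow_right₀ _ (by omega)
        rw [le_div_iff₀ (by positivity)]
        nlinarith [abs_nonneg q]

end

section
variable {q x : ℝ} (hq : |q| < 1) (hx : |x| < 1)

include hq hx

lemma Pinv_bound (n : ℕ) :
    |Pinv q x n| ≤ Real.exp (|x| / (1 - |q| * |x|) * (1 - |q|)⁻¹) := by
  have ha0 := abs_nonneg q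
  have hx0 := abs_nonneg x
  have hab : |q| * |x| < 1 := by nlinarith
  have hab0 : (0:ℝ) ≤ |q| * |x| := by positivity
  set c := |x| / (1 - |q| * |x|) with hc
  have hc0 : 0 ≤ c := by
    apply div_nonneg hx0; linarith
  have hfac : ∀ r ∈ Finset.Icc 1 n, |(1 - q ^ r * x)⁻¹| ≤ Real.exp (c * |q| ^ r) := by
    intro r hr
    have hr1 : 1 ≤ r := (Finset.mem_Icc.mp hr).1
    have ht : |q| ^ r * |x| ≤ |q| * |x| := by
      apply mul_le_mul_of_nonneg_right _ hx0
      calc |q| ^ r ≤ |q| ^ 1 := pow_le_pow_of_le_one ha0 hq.le hr1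
        _ = |q| := pow_one _
    have ht0 : (0:ℝ) ≤ |q| ^ r * |x| := by positivity
    have habs : |1 - q ^ r * x| ≥ 1 - |q| ^ r * |x| := by
      have h1 : |q ^ r * x| = |q| ^ r * |x| := by rw [abs_mul, abs_pow]
      have := abs_sub_abs_le_abs_sub (1 : ℝ) (q ^ r * x)
      rw [abs_one] at this
      linarith
    have hpos : (0:ℝ) < 1 - |q| ^ r * |x| := by linarith
    rw [abs_inv]
    have step1 : |1 - q ^ r * x|⁻¹ ≤ (1 - |q| ^ r * |x|)⁻¹ :=
      inv_anti₀ hpos habs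
    have step2 : (1 - |q| ^ r * |x|)⁻¹ ≤ 1 + c * |q| ^ r := by
      have hu : (0:ℝ) < 1 - |q| * |x| := by linarith
      have hcq_eq : c * |q| ^ r * (1 - |q| * |x|) = |q| ^ r * |x| := by
        rw [hc, div_mul_eq_mul_div, div_mul_cancel₀ _ hu.ne']; ring
      have h5 : (c * |q| ^ r) * (1 - |q| * |x|) ≤ (c * |q| ^ r) * (1 - |q| ^ r * |x|) :=
        mul_le_mul_of_nonneg_left (by linarith) (by positivity)
      rw [inv_eq_one_div, div_le_iff₀ hpos]
      nlinarith [h5, hcq_eq]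
    have step3 : 1 + c * |q| ^ r ≤ Real.exp (c * |q| ^ r) := by
      have := Real.add_one_le_exp (c * |q| ^ r)
      linarith
    linarith
  calc |Pinv q x n| ≤ ∏ r ∈ Finset.Icc 1 n, Real.exp (c * |q| ^ r) := by
        rw [Pinv, abs_prod]
        exact Finset.prod_le_prod (fun _ _ => abs_nonneg _) hfac
    _ = Real.exp (∑ r ∈ Finset.Icc 1 n, c * |q| ^ r) := (Real.exp_sum _ _).symm
    _ ≤ Real.exp (c * (1 - |q|)⁻¹) := by
        apply Real.exp_le_exp.mpr
        rw [← Finset.mul_sum]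
        apply mul_le_mul_of_nonneg_left _ hc0
        calc ∑ r ∈ Finset.Icc 1 n, |q| ^ r
            ≤ ∑ r ∈ Finset.range (n + 1), |q| ^ r := by
              apply Finset.sum_le_sum_of_subset_of_nonneg
              · intro r hr
                rw [Finset.mem_range]; exact Nat.lt_succ_of_le (Finset.mem_Icc.mp hr).2
              · intro i _ _; positivity
          _ ≤ (1 - |q|)⁻¹ := geom_aux ha0 hq _
    _ = Real.exp (|x| / (1 - |q| * |x|) * (1 - |q|)⁻¹) := rfl

end

section
variable {q x : ℝ} (hq : |q| < 1) (hx : |x| < 1)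
include hq hx

lemma Pfun_bound (j N : ℕ) :
    |Pfun q x j N| ≤ (j + 1 : ℝ) * (2 / (1 - |q|) ^ 2) ^ j * |x| ^ N := by
  have hB : (0:ℝ) ≤ (2 / (1 - |q|) ^ 2) ^ j := by positivity
  calc |Pfun q x j N| ≤ ∑ s ∈ Finset.range (j + 1),
        |(-1 : ℝ) ^ (N + s) * q ^ ((N + s + 1).choose 2) * qBinom q (N + j) (j - s) * x ^ (N + s)| :=
        Finset.abs_sum_le_sum_abs _ _
    _ ≤ ∑ _s ∈ Finset.range (j + 1), (2 / (1 - |q|) ^ 2) ^ j * |x| ^ N := by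
        apply Finset.sum_le_sum
        intro s hs
        have hsj : s ≤ j := by have := Finset.mem_range.mp hs; omega
        rw [abs_mul, abs_mul, abs_mul, abs_pow, abs_pow, abs_pow, abs_neg, abs_one, one_pow,
          one_mul]
        have h1 : |q| ^ ((N + s + 1).choose 2) ≤ 1 := pow_le_one₀ (abs_nonneg q) hq.le
        have h2 : |x| ^ (N + s) ≤ |x| ^ N :=
          pow_le_pow_of_le_one (abs_nonneg x) hx.le (by omega)
        have h3 := qBinom_bound hq N j s hsj
        have h4 : (0:ℝ) ≤ |x| ^ (N + s) := by positivity
        calc |q| ^ ((N + s + 1).choose 2) * |qBinom q (N + j) (j - s)| * |x| ^ (N + s)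
            ≤ 1 * (2 / (1 - |q|) ^ 2) ^ j * |x| ^ N := by
              apply mul_le_mul _ h2 h4 (by positivity)
              apply mul_le_mul h1 h3 (abs_nonneg _) zero_le_one
          _ = (2 / (1 - |q|) ^ 2) ^ j * |x| ^ N := by ring
    _ = (j + 1 : ℝ) * (2 / (1 - |q|) ^ 2) ^ j * |x| ^ N := by
        rw [Finset.sum_const, Finset.card_range, nsmul_eq_mul]
        push_cast; ring

lemma core_hasSum (j : ℕ) : HasSum (termK q x j) 1 := by
  set B : ℝ := (j + 1 : ℝ) * (2 / (1 - |q|) ^ 2) ^ j with hBdef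
  set K : ℝ := Real.exp (|x| / (1 - |q| * |x|) * (1 - |q|)⁻¹) with hKdef
  have ha : (0:ℝ) < 1 - |q| := by linarith [abs_nonneg q]
  have hB0 : (0:ℝ) < B := by
    rw [hBdef]
    exact mul_pos (by positivity) (pow_pos (div_pos two_pos (pow_pos ha 2)) j)
  have hK0 : (0:ℝ) < K := Real.exp_pos _
  have htermB : ∀ k, |termK q x j k| ≤ B * K * |x| ^ k := by
    intro k
    rw [termK, abs_mul]
    have h1 : |(-1 : ℝ) ^ k * q ^ ((k + 1).choose 2) * qBinom q (k + j) j * x ^ k|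
        ≤ B * |x| ^ k := by
      have h2 : |qBinom q (k + j) j| ≤ (2 / (1 - |q|) ^ 2) ^ j := by
        have := qBinom_bound hq k j 0 (Nat.zero_le j)
        rwa [Nat.sub_zero] at this
      rw [abs_mul, abs_mul, abs_mul, abs_pow, abs_pow, abs_pow, abs_neg, abs_one, one_pow,
        one_mul, hBdef]
      have h1 : |q| ^ ((k + 1).choose 2) ≤ 1 := pow_le_one₀ (abs_nonneg q) hq.le
      calc |q| ^ ((k + 1).choose 2) * |qBinom q (k + j) j| * |x| ^ k
          ≤ 1 * (2 / (1 - |q|) ^ 2) ^ j * |x| ^ k := by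
            apply mul_le_mul _ le_rfl (by positivity) (by positivity)
            apply mul_le_mul h1 h2 (abs_nonneg _) zero_le_one
        _ ≤ (j + 1 : ℝ) * (2 / (1 - |q|) ^ 2) ^ j * |x| ^ k := by
            have : (1:ℝ) ≤ (j + 1 : ℝ) := by push_cast; linarith [Nat.cast_nonneg (α := ℝ) j]
            apply mul_le_mul_of_nonneg_right _ (by positivity)
            apply mul_le_mul_of_nonneg_right _ (by positivity)
            linarith
    calc |(-1 : ℝ) ^ k * q ^ ((k + 1).choose 2) * qBinom q (k + j) j * x ^ k| * |Pinv q x (k + j + 1)|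
        ≤ (B * |x| ^ k) * K := by
          apply mul_le_mul h1 (Pinv_bound hq hx _) (abs_nonneg _) (by positivity)
      _ = B * K * |x| ^ k := by ring
  have hsummable : Summable (termK q x j) := by
    apply Summable.of_norm_bounded (g := fun k => B * K * |x| ^ k)
      (((summable_geometric_of_lt_one (abs_nonneg x) hx)).mul_left (B * K))
    intro k
    rw [Real.norm_eq_abs]
    exact htermB k
  rw [hsummable.hasSum_iff_tendsto_nat]
  have heq : (fun n => ∑ i ∈ Finset.range n, termK q x j i) = fun n => 1 - Gfun q x j n := by
    funext n; exact partial_sum hq hx j n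
  rw [heq]
  have hG : Filter.Tendsto (fun n => Gfun q x j n) Filter.atTop (nhds 0) := by
    apply squeeze_zero_norm (a := fun n => (B * K) * |x| ^ n)
    · intro n
      rw [Real.norm_eq_abs, Gfun, abs_mul]
      calc |Pfun q x j n| * |Pinv q x (n + j)| ≤ (B * |x| ^ n) * K := by
            apply mul_le_mul (Pfun_bound hq hx j n) (Pinv_bound hq hx _) (abs_nonneg _)
              (by positivity)
        _ = B * K * |x| ^ n := by ring
    · simpa using (tendsto_pow_atTop_nhds_zero_of_lt_one (abs_nonneg x) hx).const_mul (B * K)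
  have := Filter.Tendsto.sub (tendsto_const_nhds (x := (1:ℝ)) (f := Filter.atTop)) hG
  simpa using this

end

lemma choose_add (j k : ℕ) :
    (k + j + 1).choose 2 = (j + 1).choose 2 + (k + 1).choose 2 + j * k := by
  induction k with
  | zero => simp
  | succ n ih =>
    have h1 : (n + j + 1 + 1).choose 2 = (n + j + 1).choose 2 + (n + j + 1) := choose_two_succ _
    have h2 : (n + 1 + 1).choose 2 = (n + 1).choose 2 + (n + 1) := choose_two_succ _
    rw [show n + 1 + j + 1 = n + j + 1 + 1 by omega, h1, ih, h2, Nat.mul_succ]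
    ring

theorem q_series_identity_general (j : ℕ) (q y : ℝ) (hq0 : q ≠ 0) (hq : |q| < 1)
    (hy0 : y ≠ 0) (hy : |y| < 1) :
    (-1 : ℝ) ^ j * q ^ (-(((j + 1).choose 2 : ℕ) : ℤ)) * y ^ (-(j : ℤ)) *
        ∑' i : ℕ, (if j ≤ i then
          (-1 : ℝ) ^ i * q ^ ((i + 1).choose 2) * qBinom q i j * y ^ i *
            ∏ r ∈ Finset.Icc 1 (i + 1), (1 - q ^ (r + j) * y)⁻¹
          else 0) = 1 := by
  set x : ℝ := q ^ j * y with hxdef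
  have hx : |x| < 1 := by
    rw [hxdef, abs_mul, abs_pow]
    calc |q| ^ j * |y| ≤ 1 * |y| := by
          apply mul_le_mul_of_nonneg_right _ (abs_nonneg y)
          exact pow_le_one₀ (abs_nonneg q) hq.le
      _ = |y| := one_mul _
      _ < 1 := hy
  set S : ℝ := (-1 : ℝ) ^ j * q ^ ((j + 1).choose 2) * y ^ j with hSdef
  set f : ℕ → ℝ := fun i => if j ≤ i then
      (-1 : ℝ) ^ i * q ^ ((i + 1).choose 2) * qBinom q i j * y ^ i *
        ∏ r ∈ Finset.Icc 1 (i + 1), (1 - q ^ (r + j) * y)⁻¹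
      else 0 with hfdef
  have hshift : ∀ k, f (k + j) = S * termK q x j k := by
    intro k
    have hprod : ∏ r ∈ Finset.Icc 1 (k + j + 1), (1 - q ^ (r + j) * y)⁻¹
        = Pinv q x (k + j + 1) := by
      rw [Pinv]
      refine Finset.prod_congr rfl fun r _ => ?_
      rw [hxdef, pow_add]
      ring_nf
    rw [hfdef]
    simp only [if_pos (Nat.le_add_left j k)]
    rw [hprod, termK, hSdef, hxdef, choose_add]
    ring
  have hfS : HasSum f S := by
    have h1 : HasSum (fun k => f (k + j)) (S * 1) := by
      rw [show (fun k => f (k + j)) = fun k => S * termK q x j k from funext hshift]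
      exact (core_hasSum hq hx j).mul_left S
    have h2 := (hasSum_nat_add_iff j).mp h1
    have h3 : ∑ i ∈ Finset.range j, f i = 0 := by
      apply Finset.sum_eq_zero
      intro i hi
      rw [hfdef]
      exact if_neg (by have := Finset.mem_range.mp hi; omega)
    rwa [h3, mul_one, add_zero] at h2
  rw [hfS.tsum_eq, hSdef]
  have hqc : q ^ ((j + 1).choose 2) ≠ 0 := pow_ne_zero _ hq0
  have hyj : y ^ j ≠ 0 := pow_ne_zero _ hy0
  rw [zpow_neg, zpow_neg, zpow_natCast, zpow_natCast]
  have hs1 : ((-1 : ℝ)) ^ j * (-1 : ℝ) ^ j = 1 := by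
    rw [← pow_add]
    exact Even.neg_one_pow ⟨j, rfl⟩
  calc (-1 : ℝ) ^ j * (q ^ ((j + 1).choose 2))⁻¹ * (y ^ j)⁻¹ *
        ((-1 : ℝ) ^ j * q ^ ((j + 1).choose 2) * y ^ j)
      = ((-1 : ℝ) ^ j * (-1 : ℝ) ^ j) * ((q ^ ((j + 1).choose 2))⁻¹ * q ^ ((j + 1).choose 2))
          * ((y ^ j)⁻¹ * y ^ j) := by ring
    _ = 1 := by rw [hs1, inv_mul_cancel₀ hqc, inv_mul_cancel₀ hyj]; norm_num
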